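/- For every constant C > 0 there are infinitely many n such that p_{n+1} − p_n > C·log p_n; equivalently, limsup_{n→∞} (p_{n+1} − p_n)/log p_n = ∞. -/

import Mathlib

open Filter Finset



/-- Master asymptotic estimate: `A * (log x)^r ≤ ε * x^s` eventually. -/
lemma eventually_log_pow_le (r : ℕ) (A ε s : ℝ) (hε : 0 < ε) (hs : 0 < s) :
    ∀ᶠ x : ℝ in atTop, A * Real.log x ^ r ≤ ε * x ^ s := by
  have h := isLittleO_log_rpow_rpow_atTop (s := s) (r : ℝ) hs
  have hδ : 0 < ε / (|A| + 1) := by positivity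
  have h2 := h.def hδ
  filter_upwards [h2, eventually_ge_atTop (1:ℝ)] with x hx hx1
  have hlog : 0 ≤ Real.log x := Real.log_nonneg hx1
  have hxs : 0 ≤ x ^ s := Real.rpow_nonneg (by linarith) s
  rw [Real.norm_eq_abs, Real.norm_eq_abs, abs_of_nonneg (Real.rpow_nonneg hlog _),
    abs_of_nonneg hxs] at hx
  have hA : A * Real.log x ^ r ≤ |A| * Real.log x ^ (r:ℝ) := by
    rw [Real.rpow_natCast]
    exact mul_le_mul_of_nonneg_right (le_abs_self A) (pow_nonneg hlog r)
  refine hA.trans ?_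
  have h3 : |A| * Real.log x ^ (r:ℝ) ≤ |A| * (ε / (|A| + 1) * x ^ s) :=
    mul_le_mul_of_nonneg_left hx (abs_nonneg A)
  refine h3.trans ?_
  rw [← mul_assoc]
  refine mul_le_mul_of_nonneg_right ?_ hxs
  rw [div_eq_mul_inv, ← mul_assoc]
  have hpos : (0:ℝ) < |A| + 1 := by positivity
  rw [mul_inv_le_iff₀ hpos]
  nlinarith [abs_nonneg A, hε.le]

lemma eventually_log_pow_le_nat (r : ℕ) (A ε : ℝ) (hε : 0 < ε) :
    ∀ᶠ y : ℕ in atTop, A * Real.log y ^ r ≤ ε * y := by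
  have h := eventually_log_pow_le r A ε 1 hε one_pos
  have h' : ∀ᶠ x : ℝ in atTop, A * Real.log x ^ r ≤ ε * x := by
    filter_upwards [h] with x hx
    rwa [Real.rpow_one] at hx
  exact tendsto_natCast_atTop_atTop.eventually h'

lemma prod_primesBelow_le (N : ℕ) : ∏ p ∈ N.primesBelow, p ≤ 4 ^ N := by
  refine le_trans ?_ (primorial_le_4_pow N)
  unfold primorial Nat.primesBelow
  apply Finset.prod_le_prod_of_subset_of_one_le'
  · exact Finset.filter_subset_filter _ (Finset.range_subset_range.mpr (Nat.le_succ N))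
  · intro p hp _
    exact (Nat.prime_of_mem_primesBelow hp).one_lt.le

/-- Chebyshev upper bound. -/
lemma cheb_upper : ∀ᶠ N : ℕ in atTop, (N.primesBelow.card : ℝ) * Real.log N ≤ 3 * N := by
  have hev := tendsto_natCast_atTop_atTop.eventually
    (eventually_log_pow_le 1 1 (1/20) (1/2) (by norm_num) (by norm_num))
  filter_upwards [hev, eventually_ge_atTop 2] with N hlog hN2
  rw [pow_one, one_mul] at hlog
  set s := Nat.sqrt N with hs
  have hsplit := Finset.card_filter_add_card_filter_not
    (s := N.primesBelow) (p := fun p => p ≤ s)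
  set c₁ := (N.primesBelow.filter (fun p => p ≤ s)).card with hc₁
  set c₂ := (N.primesBelow.filter (fun p => ¬ p ≤ s)).card with hc₂
  have hc1 : c₁ ≤ s + 1 := by
    rw [hc₁]
    refine le_trans (Finset.card_le_card (fun p hp => ?_)) (Finset.card_range (s+1)).le
    simp only [Finset.mem_filter] at hp
    exact Finset.mem_range.mpr (Nat.lt_succ_of_le hp.2)
  -- (s+1)^c₂ ≤ 4^N
  have hpow : (s + 1) ^ c₂ ≤ 4 ^ N := by
    refine le_trans ?_ (prod_primesBelow_le N)
    refine le_trans (Finset.pow_card_le_prod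
      (N.primesBelow.filter (fun p => ¬ p ≤ s)) (fun p => p) (s+1)
      (fun p hp => by
        simp only [Finset.mem_filter, not_le] at hp
        exact hp.2)) ?_
    · exact Finset.prod_le_prod_of_subset_of_one_le' (Finset.filter_subset _ _)
        (fun p hp _ => (Nat.prime_of_mem_primesBelow hp).one_lt.le)
  -- logs
  have hN0 : (0:ℝ) < N := by exact_mod_cast Nat.lt_of_lt_of_le (by norm_num) hN2
  have hlogN : (0:ℝ) < Real.log N := Real.log_pos (by exact_mod_cast hN2)
  have hs1 : (0:ℝ) < ((s:ℝ) + 1) := by positivity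
  have hlog2 : (c₂ : ℝ) * Real.log (s+1) ≤ N * Real.log 4 := by
    have := Real.log_le_log (by positivity) (show (((s+1)^c₂ : ℕ) : ℝ) ≤ ((4^N : ℕ) : ℝ) by
      exact_mod_cast hpow)
    rwa [Nat.cast_pow, Nat.cast_pow, Real.log_pow, Real.log_pow, Nat.cast_add,
      Nat.cast_one, Nat.cast_ofNat] at this
  have hsqlog : Real.log N ≤ 2 * Real.log ((s:ℝ)+1) := by
    have h1 : (N:ℝ) ≤ ((s:ℝ)+1)^2 := by
      have := Nat.lt_succ_sqrt N
      have : N ≤ (s+1) * (s+1) := le_of_lt (by simpa [Nat.succ_eq_add_one] using this)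
      have h2 : (N:ℝ) ≤ ((s+1) * (s+1) : ℕ) := by exact_mod_cast this
      rw [Nat.cast_mul, Nat.cast_add, Nat.cast_one] at h2
      nlinarith
    calc Real.log N ≤ Real.log (((s:ℝ)+1)^2) := Real.log_le_log hN0 h1
      _ = 2 * Real.log ((s:ℝ)+1) := by rw [Real.log_pow]; push_cast; ring
  have hc2log : (c₂:ℝ) * Real.log N ≤ 2 * N * Real.log 4 := by
    have hlogs1 : 0 ≤ Real.log ((s:ℝ)+1) := Real.log_nonneg (by linarith)
    calc (c₂:ℝ) * Real.log N ≤ (c₂:ℝ) * (2 * Real.log ((s:ℝ)+1)) :=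
          mul_le_mul_of_nonneg_left hsqlog (Nat.cast_nonneg c₂)
      _ = 2 * ((c₂:ℝ) * Real.log ((s:ℝ)+1)) := by ring
      _ ≤ 2 * (N * Real.log 4) := by
          have : (c₂ : ℝ) * Real.log (↑s+1) ≤ N * Real.log 4 := by
            simpa using hlog2
          linarith
      _ = 2 * N * Real.log 4 := by ring
  -- s+1 small
  have hsr : (s:ℝ) ≤ (N:ℝ) ^ ((1:ℝ)/2) := by
    have h1 : ((s:ℝ))^2 ≤ N := by exact_mod_cast Nat.sqrt_le' N
    have := Real.rpow_le_rpow (by positivity : (0:ℝ) ≤ (s:ℝ)^2) h1 (by norm_num : (0:ℝ) ≤ 1/2)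
    rwa [← Real.rpow_natCast (s:ℝ) 2, ← Real.rpow_mul (Nat.cast_nonneg s), (by norm_num : ((2:ℕ):ℝ) * (1/2) = 1), Real.rpow_one] at this
  have hc1log : (c₁:ℝ) * Real.log N ≤ (1/5 : ℝ) * N := by
    have hc1r : (c₁:ℝ) ≤ (s:ℝ) + 1 := by exact_mod_cast hc1
    have hN1 : (1:ℝ) ≤ (N:ℝ) := by exact_mod_cast (by omega : 1 ≤ N)
    have hNr : (1:ℝ) ≤ (N:ℝ) ^ ((1:ℝ)/2) := by
      have := Real.rpow_le_rpow zero_le_one hN1 (by norm_num : (0:ℝ) ≤ 1/2)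
      rwa [Real.one_rpow] at this
    have hNN : (N:ℝ) ^ ((1:ℝ)/2) * (N:ℝ) ^ ((1:ℝ)/2) = N := by
      rw [← Real.rpow_add hN0]; norm_num
    calc (c₁:ℝ) * Real.log N ≤ ((s:ℝ)+1) * Real.log N := by
          refine mul_le_mul_of_nonneg_right hc1r hlogN.le
      _ ≤ ((N:ℝ)^((1:ℝ)/2) + (N:ℝ)^((1:ℝ)/2)) * ((1/20) * (N:ℝ)^((1:ℝ)/2)) := by
          refine mul_le_mul (by linarith) hlog (hlogN.le) (by positivity)
      _ = (1/10) * ((N:ℝ)^((1:ℝ)/2) * (N:ℝ)^((1:ℝ)/2)) := by ring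
      _ = (1/10) * N := by rw [hNN]
      _ ≤ (1/5) * N := by linarith
  have hlog4 : Real.log 4 ≤ 1.3862943616 := by
    rw [show (4:ℝ) = 2^2 by norm_num, Real.log_pow]
    have := Real.log_two_lt_d9
    push_cast
    linarith
  have hcard : ((N.primesBelow.card : ℝ)) = (c₁:ℝ) + c₂ := by exact_mod_cast hsplit.symm
  rw [hcard, add_mul]
  nlinarith [hc2log, hc1log, hlog4, hN0.le, mul_le_mul_of_nonneg_left hlog4 hN0.le]

/-- Chebyshev lower bound. -/
lemma cheb_lower : ∀ᶠ N : ℕ in atTop, (N:ℝ) ≤ 2 * (N.primesBelow.card : ℝ) * Real.log N := by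
  filter_upwards [eventually_log_pow_le_nat 1 2 (1/10) (by norm_num), eventually_ge_atTop 80]
    with N hlog hN8
  rw [pow_one] at hlog
  set n := N / 2 with hn
  have hn4 : 4 ≤ n := by omega
  have hn0 : 0 < n := by omega
  have h2n : 0 < 2 * n := by omega
  have hcb : 4 ^ n ≤ n * n.centralBinom := (Nat.four_pow_lt_mul_centralBinom n hn4).le
  have hcbne : n.centralBinom ≠ 0 := (Nat.centralBinom_pos n).ne'
  set π₂ := (2 * n + 1).primesBelow.card with hπ₂
  have hcb2 : n.centralBinom ≤ (2 * n) ^ π₂ := by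
    conv_lhs => rw [← Nat.factorization_prod_pow_eq_self hcbne]
    rw [Finsupp.prod]
    have hsub : n.centralBinom.factorization.support ⊆ (2 * n + 1).primesBelow := by
      intro p hp
      rw [Nat.support_factorization] at hp
      have hpp : p.Prime := Nat.prime_of_mem_primeFactors hp
      have hple : p ≤ 2 * n := by
        have h1 : p ^ (n.centralBinom.factorization p) ≤ 2 * n := by
          unfold Nat.centralBinom
          exact Nat.pow_factorization_choose_le h2n
        have h2 : 1 ≤ n.centralBinom.factorization p := by
          rw [← Nat.Prime.dvd_iff_one_le_factorization hpp hcbne]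
          exact Nat.dvd_of_mem_primeFactors hp
        calc p = p ^ 1 := (pow_one p).symm
          _ ≤ p ^ (n.centralBinom.factorization p) := Nat.pow_le_pow_right hpp.pos h2
          _ ≤ 2 * n := h1
      exact Nat.mem_primesBelow.mpr ⟨by omega, hpp⟩
    calc ∏ p ∈ n.centralBinom.factorization.support, p ^ n.centralBinom.factorization p
        ≤ ∏ p ∈ n.centralBinom.factorization.support, (2 * n) := by
          refine Finset.prod_le_prod' (fun p hp => ?_)
          unfold Nat.centralBinom
          exact Nat.pow_factorization_choose_le h2n
      _ = (2 * n) ^ n.centralBinom.factorization.support.card := by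
          rw [Finset.prod_const]
      _ ≤ (2 * n) ^ π₂ := Nat.pow_le_pow_right h2n (Finset.card_le_card hsub)
  have hmain : 4 ^ n ≤ n * (2 * n) ^ π₂ := hcb.trans (Nat.mul_le_mul_left n hcb2)
  -- π₂ ≤ π' N + 1
  have hπle : π₂ ≤ N.primesBelow.card + 1 := by
    have hsub : (2 * n + 1).primesBelow ⊆ insert N N.primesBelow := by
      intro p hp
      rw [Nat.mem_primesBelow] at hp
      rcases Nat.lt_or_ge p N with h | h
      · exact Finset.mem_insert_of_mem (Nat.mem_primesBelow.mpr ⟨h, hp.2⟩)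
      · have : p = N := by omega
        simp [this]
    calc π₂ ≤ (insert N N.primesBelow).card := Finset.card_le_card hsub
      _ ≤ N.primesBelow.card + 1 := Finset.card_insert_le _ _
  -- real logs
  have hN0 : (0:ℝ) < N := by exact_mod_cast (by omega : 0 < N)
  have hlogN : (0:ℝ) < Real.log N := Real.log_pos (by exact_mod_cast (by omega : 1 < N))
  have hnN : 2 * n ≤ N := by omega
  have hn0r : (0:ℝ) < (n:ℝ) := by exact_mod_cast hn0
  have h2n0r : (0:ℝ) < ((2*n : ℕ):ℝ) := by exact_mod_cast h2n
  have hlogmain : (n:ℝ) * Real.log 4 ≤ Real.log n + (π₂:ℝ) * Real.log (2*n : ℕ) := by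
    have hcast : ((4 ^ n : ℕ):ℝ) ≤ ((n * (2*n) ^ π₂ : ℕ):ℝ) := by exact_mod_cast hmain
    have hlm := Real.log_le_log (by positivity) hcast
    rw [Nat.cast_pow, Nat.cast_mul, Nat.cast_pow, Real.log_pow,
      Real.log_mul (by positivity) (by positivity), Real.log_pow] at hlm
    exact_mod_cast hlm
  have hlogn : Real.log n ≤ Real.log N := Real.log_le_log hn0r (by exact_mod_cast (by omega : n ≤ N))
  have hlog2n : Real.log ((2*n:ℕ):ℝ) ≤ Real.log N := Real.log_le_log h2n0r (by exact_mod_cast hnN)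
  have hlog2npos : (0:ℝ) ≤ Real.log ((2*n:ℕ):ℝ) := Real.log_nonneg (by exact_mod_cast (by omega : 1 ≤ 2*n))
  set pc := (N.primesBelow.card : ℝ) with hpc
  have hπr : (π₂:ℝ) ≤ pc + 1 := by rw [hpc]; exact_mod_cast hπle
  have hstep : (n:ℝ) * Real.log 4 ≤ Real.log N + (pc + 1) * Real.log N := by
    calc (n:ℝ) * Real.log 4 ≤ Real.log n + (π₂:ℝ) * Real.log ((2*n:ℕ):ℝ) := by exact_mod_cast hlogmain
      _ ≤ Real.log N + (pc + 1) * Real.log N := by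
          have h1 : (π₂:ℝ) * Real.log ((2*n:ℕ):ℝ) ≤ (pc+1) * Real.log N := by
            refine mul_le_mul hπr hlog2n hlog2npos ?_
            positivity
          linarith
  have hlog4 : (1.3862943606:ℝ) ≤ Real.log 4 := by
    rw [show (4:ℝ) = 2^2 by norm_num, Real.log_pow]
    have := Real.log_two_gt_d9
    push_cast
    linarith
  have hnhalf : ((N:ℝ) - 1) / 2 ≤ (n:ℝ) := by
    have : N ≤ 2 * n + 1 := by omega
    have h2 : (N:ℝ) ≤ 2 * (n:ℝ) + 1 := by exact_mod_cast this
    linarith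
  have hpc0 : (0:ℝ) ≤ pc := Nat.cast_nonneg _
  have hN80 : (80:ℝ) ≤ (N:ℝ) := by exact_mod_cast hN8
  nlinarith [mul_le_mul_of_nonneg_left hlog4 (by linarith : (0:ℝ) ≤ ((N:ℝ)-1)/2),
    mul_le_mul_of_nonneg_right hnhalf (by linarith : (0:ℝ) ≤ Real.log 4)]


/-- Finite sets of primes, all beyond `z`, with reciprocal sum exceeding any bound. -/
lemma exists_prime_finset_large_recip_sum (z : ℕ) (T : ℝ) :
    ∃ G : Finset ℕ, (∀ p ∈ G, p.Prime ∧ z < p) ∧ T ≤ ∑ p ∈ G, (1 / p : ℝ) := by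
  have key : ∀ j : ℕ, ∃ G : Finset ℕ, (∀ p ∈ G, p.Prime ∧ z < p) ∧
      (j : ℝ) / 2 ≤ ∑ p ∈ G, (1 / p : ℝ) := by
    intro j
    induction j with
    | zero => exact ⟨∅, by simp⟩
    | succ j ih =>
      obtain ⟨G, hG, hsum⟩ := ih
      set k := G.sup id + z + 1 with hk
      set W := (4 ^ (k.primesBelow.card + 1)).succ.primesBelow \ k.primesBelow with hW
      have hWsum := one_half_le_sum_primes_ge_one_div k
      have hWmem : ∀ p ∈ W, p.Prime ∧ k ≤ p := by
        intro p hp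
        rw [hW, Finset.mem_sdiff] at hp
        have hpp := Nat.prime_of_mem_primesBelow hp.1
        refine ⟨hpp, ?_⟩
        by_contra h
        exact hp.2 (Nat.mem_primesBelow.mpr ⟨by omega, hpp⟩)
      have hdisj : Disjoint G W := by
        rw [Finset.disjoint_left]
        intro p hpG hpW
        have h1 : p ≤ G.sup id := Finset.le_sup (f := id) hpG
        have h2 : k ≤ p := (hWmem p hpW).2
        omega
      refine ⟨G ∪ W, ?_, ?_⟩
      · intro p hp
        rcases Finset.mem_union.mp hp with h | h
        · exact hG p h
        · exact ⟨(hWmem p h).1, by have := (hWmem p h).2; omega⟩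
      · rw [Finset.sum_union hdisj]
        push_cast
        linarith
  obtain ⟨j, hj⟩ := exists_nat_ge (2 * T)
  obtain ⟨G, hG, hsum⟩ := key j
  exact ⟨G, hG, le_trans (by linarith) hsum⟩

/-- Pigeonhole: some residue class mod `a` captures at least a `1/a` fraction. -/
lemma pigeonhole_residue (a : ℕ) (ha : 1 ≤ a) (S : Finset ℕ) :
    ∃ ca, ca < a ∧ a * (S.filter (fun s => ¬ (s % a = ca))).card ≤ (a - 1) * S.card := by
  have hmap : ∀ s ∈ S, s % a ∈ Finset.range a := fun s _ =>
    Finset.mem_range.mpr (Nat.mod_lt s ha)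
  have hsum := Finset.card_eq_sum_card_fiberwise hmap
  obtain ⟨ca, hca, hmax⟩ := Finset.exists_max_image (Finset.range a)
    (fun b => (S.filter (fun s => s % a = b)).card) ⟨0, Finset.mem_range.mpr ha⟩
  refine ⟨ca, Finset.mem_range.mp hca, ?_⟩
  have hle : S.card ≤ a * (S.filter (fun s => s % a = ca)).card := by
    calc S.card = ∑ b ∈ Finset.range a, (S.filter (fun s => s % a = b)).card := hsum
      _ ≤ (Finset.range a).card • (S.filter (fun s => s % a = ca)).card :=
          Finset.sum_le_card_nsmul _ _ _ (fun b hb => hmax b hb)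
      _ = a * (S.filter (fun s => s % a = ca)).card := by
          rw [Finset.card_range, smul_eq_mul]
  have hsplit := Finset.card_filter_add_card_filter_not
    (s := S) (p := fun s => s % a = ca)
  set n₁ := (S.filter (fun s => s % a = ca)).card with hn₁
  set n₂ := (S.filter (fun s => ¬ (s % a = ca))).card with hn₂
  have hmul : a * S.card = a * n₁ + a * n₂ := by
    rw [← hsplit]; ring
  have hsub : (a - 1) * S.card = a * S.card - S.card := by
    rw [Nat.sub_mul, one_mul]
  rw [hsub]
  omega

/-- Greedy covering by residue classes. -/
lemma greedy_cover (G : Finset ℕ) (hG : ∀ p ∈ G, 1 ≤ p) (S : Finset ℕ) :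
    ∃ c : ℕ → ℕ, (∀ p ∈ G, c p < p) ∧
      (∏ p ∈ G, p) * (S.filter (fun s => ∀ p ∈ G, ¬ (s % p = c p))).card ≤
      (∏ p ∈ G, (p - 1)) * S.card := by
  induction G using Finset.induction_on with
  | empty => exact ⟨fun _ => 0, by simp⟩
  | @insert a G ha ih =>
    obtain ⟨c, hclt, hc⟩ := ih (fun p hp => hG p (Finset.mem_insert_of_mem hp))
    set S₁ := S.filter (fun s => ∀ p ∈ G, ¬ (s % p = c p)) with hS₁
    have ha1 : 1 ≤ a := hG a (Finset.mem_insert_self a G)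
    obtain ⟨ca, hca, hpig⟩ := pigeonhole_residue a ha1 S₁
    refine ⟨Function.update c a ca, ?_, ?_⟩
    · intro p hp
      rcases Finset.mem_insert.mp hp with rfl | hpG
      · rwa [Function.update_self]
      · rw [Function.update_of_ne (by rintro rfl; exact ha hpG)]
        exact hclt p hpG
    · have hfilter : S.filter (fun s => ∀ p ∈ insert a G, ¬ (s % p = Function.update c a ca p))
          = S₁.filter (fun s => ¬ (s % a = ca)) := by
        rw [hS₁, Finset.filter_filter]
        apply Finset.filter_congr
        intro s _
        simp only [Finset.forall_mem_insert, Function.update_self]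
        constructor
        · rintro ⟨h1, h2⟩
          exact ⟨fun p hp => by
            have := h2 p hp
            rwa [Function.update_of_ne (by rintro rfl; exact ha hp)] at this, h1⟩
        · rintro ⟨h2, h1⟩
          exact ⟨h1, fun p hp => by
            rw [Function.update_of_ne (by rintro rfl; exact ha hp)]
            exact h2 p hp⟩
      rw [hfilter, Finset.prod_insert ha, Finset.prod_insert ha]
      calc a * (∏ p ∈ G, p) * (S₁.filter (fun s => ¬ (s % a = ca))).card
          = (∏ p ∈ G, p) * (a * (S₁.filter (fun s => ¬ (s % a = ca))).card) := by ring
        _ ≤ (∏ p ∈ G, p) * ((a - 1) * S₁.card) := Nat.mul_le_mul_left _ hpig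
        _ = (a - 1) * ((∏ p ∈ G, p) * S₁.card) := by ring
        _ ≤ (a - 1) * ((∏ p ∈ G, (p - 1)) * S.card) := Nat.mul_le_mul_left _ hc
        _ = (a - 1) * (∏ p ∈ G, (p - 1)) * S.card := by ring


/-- A number ≤ 2^k all of whose prime factors lie in `G` divides `(∏ G)^k`. -/
lemma dvd_prod_pow_of_factors_subset (G : Finset ℕ) (hG : ∀ p ∈ G, p.Prime) (k s : ℕ)
    (hs : 1 ≤ s) (hsk : s ≤ 2 ^ k) (hfac : ∀ q, q.Prime → q ∣ s → q ∈ G) :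
    s ∣ (∏ p ∈ G, p) ^ k := by
  have hPl : (∏ p ∈ G, p) ≠ 0 :=
    Finset.prod_ne_zero_iff.mpr (fun p hp => (hG p hp).pos.ne')
  have hM : (∏ p ∈ G, p) ^ k ≠ 0 := pow_ne_zero k hPl
  rw [← Nat.factorization_le_iff_dvd (by omega) hM]
  rw [Finsupp.le_iff]
  intro p hp
  rw [Nat.support_factorization] at hp
  have hpp : p.Prime := Nat.prime_of_mem_primeFactors hp
  have hpG : p ∈ G := hfac p hpp (Nat.dvd_of_mem_primeFactors hp)
  have hupper : s.factorization p ≤ k := by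
    have h1 : p ^ s.factorization p ∣ s := Nat.ordProj_dvd s p
    have h2 : p ^ s.factorization p ≤ s := Nat.le_of_dvd (by omega) h1
    have h3 : 2 ^ s.factorization p ≤ p ^ s.factorization p :=
      Nat.pow_le_pow_left hpp.two_le _
    have h4 : 2 ^ s.factorization p ≤ 2 ^ k := le_trans h3 (le_trans h2 hsk)
    exact (Nat.pow_le_pow_iff_right (by norm_num)).mp h4
  have hlower : k ≤ ((∏ p ∈ G, p) ^ k).factorization p := by
    rw [Nat.factorization_pow, Finsupp.smul_apply, smul_eq_mul]
    have h1 : 0 < (∏ p ∈ G, p).factorization p :=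
      (hpp.factorization_pos_of_dvd hPl (Finset.dvd_prod_of_mem _ hpG))
    calc k = k * 1 := (mul_one k).symm
      _ ≤ k * (∏ p ∈ G, p).factorization p := Nat.mul_le_mul_left k h1
  omega

/-- The product of a finset of primes has factorization ≤ 1 everywhere. -/
lemma factorization_prod_primes_le_one (G : Finset ℕ) (hG : ∀ p ∈ G, p.Prime) (p : ℕ) :
    (∏ q ∈ G, q).factorization p ≤ 1 := by
  rw [Nat.factorization_prod (fun q hq => (hG q hq).pos.ne')]
  have : ∀ q ∈ G, (q.factorization) p = if q = p then 1 else 0 := by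
    intro q hq
    rw [(hG q hq).factorization, Finsupp.single_apply]
  rw [Finset.sum_apply']
  rw [Finset.sum_congr rfl this]
  rw [Finset.sum_ite_eq' G p (fun _ => 1)]
  split <;> omega

lemma card_divisors_prod_pow_le (G : Finset ℕ) (hG : ∀ p ∈ G, p.Prime) (k : ℕ) :
    ((∏ p ∈ G, p) ^ k).divisors.card ≤ (k + 1) ^ G.card := by
  have hPl : (∏ p ∈ G, p) ≠ 0 :=
    Finset.prod_ne_zero_iff.mpr (fun p hp => (hG p hp).pos.ne')
  have hM : (∏ p ∈ G, p) ^ k ≠ 0 := pow_ne_zero k hPl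
  rw [Nat.card_divisors hM]
  have hsub : ((∏ p ∈ G, p) ^ k).primeFactors ⊆ G := by
    intro p hp
    have hpp : p.Prime := Nat.prime_of_mem_primeFactors hp
    have hdvd : p ∣ (∏ q ∈ G, q) ^ k := Nat.dvd_of_mem_primeFactors hp
    have hdvd2 : p ∣ ∏ q ∈ G, q := hpp.prime.dvd_of_dvd_pow hdvd
    obtain ⟨q, hqG, hpq⟩ := hpp.prime.exists_mem_finset_dvd hdvd2
    rwa [(Nat.prime_dvd_prime_iff_eq hpp (hG q hqG)).mp hpq]
  calc ∏ p ∈ ((∏ p ∈ G, p) ^ k).primeFactors, (((∏ p ∈ G, p) ^ k).factorization p + 1)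
      ≤ ∏ p ∈ ((∏ p ∈ G, p) ^ k).primeFactors, (k + 1) := by
        refine Finset.prod_le_prod' (fun p hp => ?_)
        have h1 : ((∏ q ∈ G, q) ^ k).factorization p = k * (∏ q ∈ G, q).factorization p := by
          rw [Nat.factorization_pow, Finsupp.smul_apply, smul_eq_mul]
        have h2 := factorization_prod_primes_le_one G hG p
        have : ((∏ q ∈ G, q) ^ k).factorization p ≤ k := by
          rw [h1]
          calc k * (∏ q ∈ G, q).factorization p ≤ k * 1 := Nat.mul_le_mul_left k h2
            _ = k := mul_one k
        omega
    _ = (k + 1) ^ ((∏ p ∈ G, p) ^ k).primeFactors.card := Finset.prod_const _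
    _ ≤ (k + 1) ^ G.card := Nat.pow_le_pow_right (by omega) (Finset.card_le_card hsub)

/-- Chinese Remainder Theorem for a finset of primes. -/
lemma crt_finset (U : Finset ℕ) (hU : ∀ p ∈ U, p.Prime) (a : ℕ → ℕ) :
    ∃ m : ℕ, ∀ p ∈ U, m % p = a p % p := by
  induction U using Finset.induction_on with
  | empty => exact ⟨0, by simp⟩
  | @insert p U hp ih =>
    obtain ⟨m₁, hm₁⟩ := ih (fun q hq => hU q (Finset.mem_insert_of_mem hq))
    have hcop : Nat.Coprime p (∏ q ∈ U, q) := by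
      refine Nat.Coprime.prod_right (fun q hq => ?_)
      exact (Nat.coprime_primes (hU p (Finset.mem_insert_self p U))
        (hU q (Finset.mem_insert_of_mem hq))).mpr (by rintro rfl; exact hp hq)
    obtain ⟨m, hm⟩ := Nat.chineseRemainder hcop (a p) m₁
    refine ⟨m, fun q hq => ?_⟩
    rcases Finset.mem_insert.mp hq with rfl | hqU
    · exact hm.1
    · have h1 : m ≡ m₁ [MOD q] := (hm.2).of_dvd (Finset.dvd_prod_of_mem _ hqU)
      have h2 : m₁ ≡ a q [MOD q] := hm₁ q hqU
      exact h1.trans h2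

set_option maxHeartbeats 2000000 in
/-- Core construction: arbitrarily long runs of composites, cheap in log terms. -/
lemma core_construction (C : ℝ) (hC : 1 ≤ C) (N : ℕ) :
    ∃ m y : ℕ, 2 ≤ m ∧ N ≤ y ∧ y ≤ m ∧
      (∀ s : ℕ, 1 ≤ s → s ≤ y → ¬ (m + s).Prime) ∧ C * Real.log m < y := by
  have hC0 : (0:ℝ) < C := by linarith
  -- the fixed prime set G
  set c₈ : ℕ := ⌈8 * C⌉₊ with hc₈def
  have hc₈8 : 8 ≤ c₈ := by
    have : (8:ℝ) ≤ 8 * C := by linarith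
    have h2 := Nat.le_ceil (8 * C)
    have : (8:ℝ) ≤ (c₈:ℝ) := by rw [hc₈def]; exact le_trans this h2
    exact_mod_cast this
  have hc₈C : 8 * C ≤ (c₈:ℝ) := Nat.le_ceil _
  have hc₈0 : 0 < c₈ := by omega
  obtain ⟨G, hG, hGsum⟩ := exists_prime_finset_large_recip_sum c₈ (Real.log (64 * C) + 1)
  set g := G.card with hgdef
  set ρ : ℝ := ∏ p ∈ G, (1 - 1/(p:ℝ)) with hρdef
  have hGpos : ∀ p ∈ G, (0:ℝ) < (p:ℝ) := fun p hp => by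
    exact_mod_cast (hG p hp).1.pos
  have hfac_nonneg : ∀ p ∈ G, (0:ℝ) ≤ 1 - 1/(p:ℝ) := by
    intro p hp
    have h2 : (2:ℝ) ≤ (p:ℝ) := by exact_mod_cast (hG p hp).1.two_le
    have : 1/(p:ℝ) ≤ 1/2 := by
      apply div_le_div_of_nonneg_left <;> linarith
    linarith
  have hρ0 : 0 ≤ ρ := Finset.prod_nonneg hfac_nonneg
  have hρ1 : ρ ≤ 1 := by
    apply Finset.prod_le_one hfac_nonneg
    intro p hp
    have := hGpos p hp
    have : 0 ≤ 1/(p:ℝ) := by positivity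
    linarith
  have hρ : ρ ≤ 1 / (64 * C) := by
    have h1 : ρ ≤ ∏ p ∈ G, Real.exp (-(1/(p:ℝ))) := by
      refine Finset.prod_le_prod hfac_nonneg (fun p hp => ?_)
      have := Real.add_one_le_exp (-(1/(p:ℝ)))
      linarith
    have h2 : ∏ p ∈ G, Real.exp (-(1/(p:ℝ))) = Real.exp (-(∑ p ∈ G, (1/p : ℝ))) := by
      rw [← Real.exp_sum, Finset.sum_neg_distrib]
    have h3 : Real.exp (-(∑ p ∈ G, (1/p : ℝ))) ≤ Real.exp (-(Real.log (64*C) + 1)) := by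
      apply Real.exp_le_exp.mpr
      linarith
    have h4 : Real.exp (-(Real.log (64*C) + 1)) ≤ 1 / (64*C) := by
      rw [show -(Real.log (64*C) + 1) = -Real.log (64*C) + (-1) by ring, Real.exp_add,
        Real.exp_neg, Real.exp_log (by linarith : (0:ℝ) < 64*C)]
      have he : Real.exp (-1) ≤ 1 := by
        rw [Real.exp_le_one_iff]; norm_num
      have hinv : (0:ℝ) ≤ (64*C)⁻¹ := by positivity
      calc (64*C)⁻¹ * Real.exp (-1) ≤ (64*C)⁻¹ * 1 := by nlinarith
        _ = 1/(64*C) := by rw [mul_one, one_div]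
    linarith
  set K_G : ℝ := ∑ p ∈ G, Real.log p with hKG
  have hKG0 : 0 ≤ K_G := Finset.sum_nonneg (fun p hp =>
    Real.log_nonneg (by exact_mod_cast (hG p hp).1.one_lt.le))
  -- choose y
  have hev : ∀ᶠ y : ℕ in atTop,
      ((y+1).primesBelow.card : ℝ) * Real.log ((y+1 : ℕ) : ℝ) ≤ 3 * ((y+1 : ℕ) : ℝ) ∧
      ((100*y+1 : ℕ):ℝ) ≤ 2 * (((100*y+1 : ℕ)).primesBelow.card : ℝ) * Real.log ((100*y+1 : ℕ)) ∧
      6 * C * Real.log y ^ 1 ≤ 1/16 * y ∧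
      (C * 5^g) * Real.log y ^ (g+1) ≤ 1/100 * y := by
    refine (((tendsto_add_atTop_nat 1).eventually cheb_upper).and
      (((tendsto_atTop_atTop_of_monotone (fun a b h => by dsimp; omega : Monotone (fun y : ℕ => 100*y+1))
        (fun b => ⟨b, by omega⟩)).eventually cheb_lower).and
      ((eventually_log_pow_le_nat 1 (6*C) (1/16) (by norm_num)).and
        (eventually_log_pow_le_nat (g+1) (C * 5^g) (1/100) (by positivity))))).mono ?_
    intro y h
    exact ⟨h.1, h.2.1, h.2.2.1, h.2.2.2⟩
  obtain ⟨y, hy⟩ := (((hev.and (eventually_ge_atTop (max (max N (c₈ * c₈)) (max 256 (G.sup id + 1))))).and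
    (eventually_ge_atTop ⌈(8:ℝ) * C * K_G⌉₊)).and
    (eventually_ge_atTop ⌈(70:ℝ) * C⌉₊)).exists
  obtain ⟨⟨⟨⟨hcheb1, hcheb2, hmaster1, hmaster2⟩, hybig⟩, hyKG⟩, hyC⟩ := hy
  rw [max_le_iff, max_le_iff, max_le_iff] at hybig
  obtain ⟨⟨hyN, hyc₈⟩, hy256, hysup⟩ := hybig
  set B := y / c₈ with hBdef
  have hc₈B : c₈ ≤ B := (Nat.le_div_iff_mul_le hc₈0).mpr hyc₈
  have hBy : B ≤ y := Nat.div_le_self y c₈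
  set U₁ := (B+1).primesBelow \ G with hU₁def
  set S₀ := (Finset.Icc 1 y).filter (fun s => ∀ p ∈ U₁, ¬ p ∣ s) with hS₀def
  obtain ⟨c, hclt, hgreedy⟩ := greedy_cover G (fun p hp => (hG p hp).1.one_lt.le) S₀
  set S_fin := S₀.filter (fun s => ∀ p ∈ G, ¬ (s % p = c p)) with hSfindef
  set k := Nat.log 2 y + 1 with hkdef
  set M := (∏ p ∈ G, p) ^ k with hMdef
  have hy2k : y ≤ 2 ^ k := (Nat.lt_pow_succ_log_self (by norm_num) y).le
  have hGprime : ∀ p ∈ G, p.Prime := fun p hp => (hG p hp).1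
  have hMne : M ≠ 0 := pow_ne_zero k (Finset.prod_ne_zero_iff.mpr
    (fun p hp => (hGprime p hp).pos.ne'))
  have hS₀sub : S₀ ⊆ (y+1).primesBelow ∪ M.divisors := by
    intro s hs
    rw [hS₀def, Finset.mem_filter, Finset.mem_Icc] at hs
    obtain ⟨⟨hs1, hsy⟩, hnofac⟩ := hs
    by_cases hbig : ∃ q, q.Prime ∧ q ∣ s ∧ B < q
    · obtain ⟨q, hq, hqs, hqB⟩ := hbig
      set t := s / q with ht
      have hst : s = q * t := (Nat.mul_div_cancel' hqs).symm
      have ht1 : t = 1 := by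
        by_contra htne
        have ht0 : 0 < t := by
          rcases Nat.eq_zero_or_pos t with h | h
          · rw [h, mul_zero] at hst; omega
          · exact h
        have hp₀ := Nat.minFac_prime htne
        have hp₀t : t.minFac ∣ t := Nat.minFac_dvd t
        have hp₀le : t.minFac ≤ t := Nat.minFac_le ht0
        have htc : t < c₈ := by
          have h1 : t * (B+1) ≤ t * q := Nat.mul_le_mul_left t hqB
          have h2 : t * q ≤ y := by rw [mul_comm, ← hst]; exact hsy
          have h3 : y < (B+1) * c₈ := by
            have : y / c₈ < B + 1 := by omega
            exact (Nat.div_lt_iff_lt_mul hc₈0).mp this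
          have h4 : t * (B+1) < (B+1) * c₈ := lt_of_le_of_lt (h1.trans h2) h3
          rw [mul_comm t (B+1)] at h4
          exact Nat.lt_of_mul_lt_mul_left h4
        have hmem : t.minFac ∈ U₁ := by
          rw [hU₁def, Finset.mem_sdiff]
          refine ⟨Nat.mem_primesBelow.mpr ⟨by omega, hp₀⟩, fun hin => ?_⟩
          have := (hG _ hin).2
          omega
        exact (hnofac _ hmem) (hp₀t.trans ⟨q, by rw [hst, mul_comm]⟩)
      have hsq : s = q := by rw [hst, ht1, mul_one]
      exact Finset.mem_union.mpr (Or.inl (Nat.mem_primesBelow.mpr ⟨by omega, hsq ▸ hq⟩))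
    · push_neg at hbig
      refine Finset.mem_union.mpr (Or.inr ?_)
      rw [Nat.mem_divisors]
      refine ⟨dvd_prod_pow_of_factors_subset G hGprime k s hs1 (le_trans hsy hy2k) ?_, hMne⟩
      intro q hq hqs
      have hqB : q ≤ B := hbig q hq hqs
      by_contra hqG
      have hmem : q ∈ U₁ := by
        rw [hU₁def, Finset.mem_sdiff]
        exact ⟨Nat.mem_primesBelow.mpr ⟨by omega, hq⟩, hqG⟩
      exact (hnofac q hmem) hqs
  have hS₀card : S₀.card ≤ (y+1).primesBelow.card + (k+1) ^ g := by
    calc S₀.card ≤ ((y+1).primesBelow ∪ M.divisors).card := Finset.card_le_card hS₀sub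
      _ ≤ (y+1).primesBelow.card + M.divisors.card := Finset.card_union_le _ _
      _ ≤ (y+1).primesBelow.card + (k+1) ^ g :=
          Nat.add_le_add_left (card_divisors_prod_pow_le G hGprime k) _
  -- real-number estimates
  have hy0 : 0 < y := by omega
  have hyr : (256:ℝ) ≤ (y:ℝ) := by exact_mod_cast hy256
  have hlog2gt := Real.log_two_gt_d9
  have hlog2lt := Real.log_two_lt_d9
  have hlogy5 : (5:ℝ) ≤ Real.log y := by
    have h1 : Real.log 256 ≤ Real.log y := Real.log_le_log (by norm_num) hyr
    have h2 : Real.log 256 = 8 * Real.log 2 := by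
      rw [show (256:ℝ) = 2^8 by norm_num, Real.log_pow]; push_cast; ring
    linarith
  have hlogy0 : (0:ℝ) < Real.log y := by linarith
  set π₁ : ℝ := ((y+1).primesBelow.card : ℝ) with hπ₁def
  set π₂ : ℝ := (((100*y+1:ℕ)).primesBelow.card : ℝ) with hπ₂def
  have hπ₁0 : 0 ≤ π₁ := Nat.cast_nonneg _
  have hπ₂0 : 0 ≤ π₂ := Nat.cast_nonneg _
  have hπ₁b : π₁ * Real.log y ≤ 6 * y := by
    push_cast at hcheb1
    have hmono : Real.log y ≤ Real.log ((y:ℝ)+1) := Real.log_le_log (by positivity) (by linarith)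
    have hm2 := mul_le_mul_of_nonneg_left hmono hπ₁0
    linarith
  have hlog100 : Real.log (((100*y+1:ℕ)):ℝ) ≤ 2 * Real.log y := by
    have h1 : (((100*y+1:ℕ)):ℝ) ≤ 102 * y := by push_cast; linarith
    have h2 : Real.log (((100*y+1:ℕ)):ℝ) ≤ Real.log (102 * y) := by
      apply Real.log_le_log (by positivity) h1
    have h3 : Real.log (102 * (y:ℝ)) = Real.log 102 + Real.log y :=
      Real.log_mul (by norm_num) (by positivity)
    have h4 : Real.log 102 ≤ Real.log 128 := Real.log_le_log (by norm_num) (by norm_num)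
    have h5 : Real.log 128 = 7 * Real.log 2 := by
      rw [show (128:ℝ) = 2^7 by norm_num, Real.log_pow]; push_cast; ring
    linarith
  have hπ₂b : 25 * (y:ℝ) ≤ π₂ * Real.log y := by
    have h1 : ((100*y+1:ℕ):ℝ) ≤ 2 * π₂ * Real.log (((100*y+1:ℕ)):ℝ) := hcheb2
    have h2 : 2 * π₂ * Real.log (((100*y+1:ℕ)):ℝ) ≤ 2 * π₂ * (2 * Real.log y) := by
      apply mul_le_mul_of_nonneg_left hlog100 (by positivity)
    have h3 : (100:ℝ) * y ≤ ((100*y+1:ℕ):ℝ) := by push_cast; linarith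
    linarith
  -- bound on (k+1)^g
  have hL2 : ((Nat.log 2 y : ℕ):ℝ) * Real.log 2 ≤ Real.log y := by
    have h1 : (2:ℕ)^(Nat.log 2 y) ≤ y := Nat.pow_log_le_self 2 (by omega)
    have h2 : ((2:ℝ))^(Nat.log 2 y) ≤ (y:ℝ) := by exact_mod_cast h1
    have h3 := Real.log_le_log (by positivity) h2
    rwa [Real.log_pow] at h3
  have hLg : ((k+1:ℕ):ℝ) ≤ 5 * Real.log y := by
    have hL0 : (0:ℝ) ≤ ((Nat.log 2 y : ℕ):ℝ) := Nat.cast_nonneg _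
    have : ((k+1:ℕ):ℝ) = ((Nat.log 2 y : ℕ):ℝ) + 2 := by rw [hkdef]; push_cast; ring
    rw [this]
    have hp := mul_nonneg hL0 (by linarith : (0:ℝ) ≤ Real.log 2 - 0.6931471803)
    linarith
  have hLgpow : (((k+1)^g : ℕ):ℝ) ≤ 5^g * (Real.log y)^g := by
    have h0 : (0:ℝ) ≤ ((k+1:ℕ):ℝ) := Nat.cast_nonneg _
    have h1 : (((k+1)^g : ℕ):ℝ) = ((k+1:ℕ):ℝ)^g := by push_cast; ring
    rw [h1, ← mul_pow]
    exact pow_le_pow_left₀ h0 hLg g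
  -- S_fin vs ρ S₀
  have hprodpos : (0:ℝ) < ∏ p ∈ G, (p:ℝ) := Finset.prod_pos hGpos
  have hcastprod : ((∏ p ∈ G, p : ℕ):ℝ) = ∏ p ∈ G, (p:ℝ) := by push_cast; rfl
  have hcastprod1 : ((∏ p ∈ G, (p-1) : ℕ):ℝ) = ∏ p ∈ G, ((p:ℝ) - 1) := by
    rw [Nat.cast_prod]
    refine Finset.prod_congr rfl (fun p hp => ?_)
    have := (hGprime p hp).one_lt
    push_cast [Nat.cast_sub (by omega : 1 ≤ p)]
    ring
  have hρform : ρ * (∏ p ∈ G, (p:ℝ)) = ∏ p ∈ G, ((p:ℝ) - 1) := by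
    rw [hρdef, ← Finset.prod_mul_distrib]
    refine Finset.prod_congr rfl (fun p hp => ?_)
    have hp0 : (p:ℝ) ≠ 0 := (hGpos p hp).ne'
    field_simp
  have hSfinρ : (S_fin.card:ℝ) ≤ ρ * S₀.card := by
    have hcast : ((∏ p ∈ G, p : ℕ):ℝ) * (S_fin.card:ℝ) ≤ ((∏ p ∈ G, (p-1) : ℕ):ℝ) * (S₀.card:ℝ) := by
      exact_mod_cast hgreedy
    rw [hcastprod, hcastprod1, ← hρform] at hcast
    have h2 : (∏ p ∈ G, (p:ℝ)) * (S_fin.card:ℝ) ≤ (∏ p ∈ G, (p:ℝ)) * (ρ * (S₀.card:ℝ)) := by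
      calc (∏ p ∈ G, (p:ℝ)) * (S_fin.card:ℝ) ≤ ρ * (∏ p ∈ G, (p:ℝ)) * (S₀.card:ℝ) := hcast
        _ = (∏ p ∈ G, (p:ℝ)) * (ρ * (S₀.card:ℝ)) := by ring
    exact le_of_mul_le_mul_left h2 hprodpos
  -- reserve pool
  set Rpool := ((100*y+1:ℕ)).primesBelow \ (y+1).primesBelow with hRpooldef
  have hRsub : (y+1).primesBelow ⊆ ((100*y+1:ℕ)).primesBelow := by
    intro p hp
    rw [Nat.mem_primesBelow] at hp ⊢
    exact ⟨by omega, hp.2⟩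
  have hRcard : (Rpool.card:ℝ) = π₂ - π₁ := by
    rw [hRpooldef, Finset.card_sdiff_of_subset hRsub, hπ₁def, hπ₂def,
      Nat.cast_sub (Finset.card_le_card hRsub)]
  have hsmooth_small : 5^g * (Real.log y)^(g+1) ≤ (1:ℝ)/100 * y := by
    have h0 : (0:ℝ) ≤ (5:ℝ)^g * (Real.log y)^(g+1) := by positivity
    have h1 := mul_le_mul_of_nonneg_right (hC) h0
    rw [one_mul] at h1
    calc 5^g * (Real.log y)^(g+1) ≤ C * (5^g * Real.log y ^ (g+1)) := h1
      _ = (C * 5^g) * Real.log y ^ (g+1) := by ring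
      _ ≤ 1/100 * y := hmaster2
  have hSfinlog : (S_fin.card:ℝ) * Real.log y ≤ 7 * y := by
    have h1 : (S_fin.card:ℝ) * Real.log y ≤ ρ * (S₀.card:ℝ) * Real.log y := by
      apply mul_le_mul_of_nonneg_right hSfinρ hlogy0.le
    have h2 : (S₀.card:ℝ) ≤ π₁ + (((k+1)^g:ℕ):ℝ) := by
      rw [hπ₁def]
      exact_mod_cast hS₀card
    have h3 : ρ * (S₀.card:ℝ) * Real.log y ≤ (π₁ + 5^g * (Real.log y)^g) * Real.log y := by
      have hs0 : (0:ℝ) ≤ (S₀.card:ℝ) := Nat.cast_nonneg _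
      have : ρ * (S₀.card:ℝ) ≤ π₁ + 5^g * (Real.log y)^g := by
        calc ρ * (S₀.card:ℝ) ≤ 1 * (S₀.card:ℝ) := mul_le_mul_of_nonneg_right hρ1 hs0
          _ = (S₀.card:ℝ) := one_mul _
          _ ≤ π₁ + (((k+1)^g:ℕ):ℝ) := h2
          _ ≤ π₁ + 5^g * (Real.log y)^g := by linarith [hLgpow]
      apply mul_le_mul_of_nonneg_right this hlogy0.le
    have h4 : (π₁ + 5^g * (Real.log y)^g) * Real.log y
        = π₁ * Real.log y + 5^g * (Real.log y)^(g+1) := by ring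
    linarith [h1, h3, h4, hπ₁b, hsmooth_small, hyr]
  have havail : S_fin.card ≤ Rpool.card := by
    have h1 : (S_fin.card:ℝ) * Real.log y < (Rpool.card:ℝ) * Real.log y := by
      rw [hRcard]
      have hd : (π₂ - π₁) * Real.log y = π₂ * Real.log y - π₁ * Real.log y := by ring
      linarith [hπ₂b, hπ₁b, hSfinlog, hyr]
    have h2 : (S_fin.card:ℝ) < (Rpool.card:ℝ) := lt_of_mul_lt_mul_right h1 hlogy0.le
    exact_mod_cast h2.le
  obtain ⟨R', hR'sub, hR'card⟩ := Finset.exists_subset_card_eq havail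
  have e := Finset.equivOfCardEq (hR'card.symm)
  set U := (U₁ ∪ G) ∪ R' with hUdef
  have hR'big : ∀ p ∈ R', y + 1 ≤ p ∧ p < 100*y+1 ∧ p.Prime := by
    intro p hp
    have h1 := hR'sub hp
    rw [hRpooldef, Finset.mem_sdiff, Nat.mem_primesBelow] at h1
    refine ⟨?_, h1.1.1, h1.1.2⟩
    by_contra h
    exact h1.2 (Nat.mem_primesBelow.mpr ⟨by omega, h1.1.2⟩)
  have hU₁mem : ∀ p ∈ U₁, p.Prime ∧ p < B+1 ∧ p ∉ G := by
    intro p hp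
    rw [hU₁def, Finset.mem_sdiff, Nat.mem_primesBelow] at hp
    exact ⟨hp.1.2, hp.1.1, hp.2⟩
  have hGlty : ∀ p ∈ G, p < y := by
    intro p hp
    have := Finset.le_sup (f := id) hp
    simp only [id] at this
    omega
  have hGR' : ∀ p ∈ G, p ∉ R' := by
    intro p hp hmem
    have := (hR'big p hmem).1
    have := hGlty p hp
    omega
  have hU₁R' : ∀ p ∈ U₁, p ∉ R' := by
    intro p hp hmem
    have h1 := (hR'big p hmem).1
    have h2 := (hU₁mem p hp).2.1
    omega
  have hUprime : ∀ p ∈ U, p.Prime := by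
    intro p hp
    rw [hUdef, Finset.mem_union, Finset.mem_union] at hp
    rcases hp with (h | h) | h
    · exact (hU₁mem p h).1
    · exact hGprime p h
    · exact (hR'big p h).2.2
  set a : ℕ → ℕ := fun p =>
    if hp : p ∈ R' then p - ((e.symm ⟨p, hp⟩ : ℕ) % p) else if p ∈ G then p - c p else 0
    with hadef
  obtain ⟨m₀, hm₀⟩ := crt_finset U hUprime a
  set P := ∏ p ∈ U, p with hPdef
  have hP0 : 0 < P := Finset.prod_pos (fun p hp => (hUprime p hp).pos)
  set m := m₀ % P + P * (100*y + 1) with hmdef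
  have hmmod : ∀ p ∈ U, m % p = a p % p := by
    intro p hp
    have hdvd : p ∣ P := Finset.dvd_prod_of_mem _ hp
    have h1 : m % P = m₀ % P := by
      rw [hmdef, Nat.add_mul_mod_self_left, Nat.mod_mod_of_dvd m₀ (dvd_refl P)]
    have h2 : m ≡ m₀ [MOD P] := h1
    exact (h2.of_dvd hdvd).trans (hm₀ p hp)
  have hmge : P * (100*y+1) ≤ m := Nat.le_add_left _ _
  have hmge2 : 100*y+1 ≤ m := le_trans (by nlinarith [hP0] : 100*y+1 ≤ P * (100*y+1)) hmge
  have hm2 : 2 ≤ m := by omega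
  have hym : y ≤ m := by omega
  -- covering
  have hcover : ∀ s : ℕ, 1 ≤ s → s ≤ y → ∃ p ∈ U, p ∣ m + s ∧ p < m + s := by
    intro s hs1 hsy
    have hple : ∀ p ∈ U, p < m + s := by
      intro p hp
      rw [hUdef, Finset.mem_union, Finset.mem_union] at hp
      have hpb : p ≤ 100*y := by
        rcases hp with (h | h) | h
        · have := (hU₁mem p h).2.1; omega
        · have := hGlty p h; omega
        · have := (hR'big p h).2.1; omega
      omega
    by_cases hU₁s : ∃ p ∈ U₁, p ∣ s
    · obtain ⟨p, hpU₁, hps⟩ := hU₁s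
      have hpU : p ∈ U := Finset.mem_union_left _ (Finset.mem_union_left _ hpU₁)
      have hap : a p = 0 := by
        rw [hadef]
        dsimp only
        rw [dif_neg (hU₁R' p hpU₁), if_neg (hU₁mem p hpU₁).2.2]
      have hmp : m % p = 0 := by
        have := hmmod p hpU
        rwa [hap, Nat.zero_mod] at this
      exact ⟨p, hpU, Nat.dvd_add (Nat.dvd_of_mod_eq_zero hmp) hps, hple p hpU⟩
    · push_neg at hU₁s
      have hsS₀ : s ∈ S₀ := by
        rw [hS₀def, Finset.mem_filter, Finset.mem_Icc]
        exact ⟨⟨hs1, hsy⟩, hU₁s⟩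
      by_cases hGs : ∃ p ∈ G, s % p = c p
      · obtain ⟨p, hpG, hsc⟩ := hGs
        have hpU : p ∈ U := Finset.mem_union_left _ (Finset.mem_union_right _ hpG)
        have hap : a p = p - c p := by
          rw [hadef]
          dsimp only
          rw [dif_neg (hGR' p hpG), if_pos hpG]
        have hcp : c p < p := hclt p hpG
        have h1 : m ≡ p - c p [MOD p] := by
          have := hmmod p hpU
          rwa [hap] at this
        have h2 : s ≡ c p [MOD p] := by
          show s % p = c p % p
          rw [hsc, Nat.mod_eq_of_lt hcp]
        have h3 : m + s ≡ (p - c p) + c p [MOD p] := h1.add h2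
        have h4 : (p - c p) + c p = p := Nat.sub_add_cancel hcp.le
        have h5 : m + s ≡ 0 [MOD p] := by
          rw [h4] at h3
          exact h3.trans (Nat.modEq_zero_iff_dvd.mpr dvd_rfl)
        exact ⟨p, hpU, Nat.modEq_zero_iff_dvd.mp h5, hple p hpU⟩
      · push_neg at hGs
        have hsfin : s ∈ S_fin := by
          rw [hSfindef, Finset.mem_filter]
          exact ⟨hsS₀, fun p hp => hGs p hp⟩
        set r := (e ⟨s, hsfin⟩ : ℕ) with hrdef
        have hrR' : r ∈ R' := (e ⟨s, hsfin⟩).2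
        have hrU : r ∈ U := Finset.mem_union_right _ hrR'
        have hrprime : r.Prime := (hR'big r hrR').2.2
        have har : a r = r - s % r := by
          rw [hadef]
          dsimp only
          rw [dif_pos hrR']
          have hsub : (⟨r, hrR'⟩ : {x // x ∈ R'}) = e ⟨s, hsfin⟩ := Subtype.ext rfl
          rw [hsub, Equiv.symm_apply_apply]
        have h1 : m ≡ r - s % r [MOD r] := by
          have := hmmod r hrU
          rwa [har] at this
        have hsr : s % r < r := Nat.mod_lt s hrprime.pos
        have h2 : s ≡ s % r [MOD r] := (Nat.mod_modEq s r).symm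
        have h3 : m + s ≡ (r - s % r) + s % r [MOD r] := h1.add h2
        have h4 : (r - s % r) + s % r = r := Nat.sub_add_cancel hsr.le
        have h5 : m + s ≡ 0 [MOD r] := by
          rw [h4] at h3
          exact h3.trans (Nat.modEq_zero_iff_dvd.mpr dvd_rfl)
        exact ⟨r, hrU, Nat.modEq_zero_iff_dvd.mp h5, hple r hrU⟩
  have hcomposite : ∀ s : ℕ, 1 ≤ s → s ≤ y → ¬ (m + s).Prime := by
    intro s h1 h2 hprime
    obtain ⟨p, hpU, hdvd, hlt⟩ := hcover s h1 h2
    have hp2 := (hUprime p hpU).two_le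
    rcases hprime.eq_one_or_self_of_dvd p hdvd with h | h
    · omega
    · omega
  refine ⟨m, y, hm2, hyN, hym, hcomposite, ?_⟩
  -- the weight estimate
  have hm0r : (0:ℝ) < (m:ℝ) := by exact_mod_cast (by omega : 0 < m)
  have hy1r : (1:ℝ) ≤ (y:ℝ) := by exact_mod_cast (by omega : 1 ≤ y)
  have hmle : m ≤ P * (100*y+2) := by
    have h1 : m₀ % P < P := Nat.mod_lt m₀ hP0
    have h2 : P * (100*y+2) = P * (100*y+1) + P := by ring
    omega
  have hPr : (0:ℝ) < (P:ℝ) := by exact_mod_cast hP0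
  have hlogm : Real.log m ≤ Real.log P + Real.log (100*(y:ℝ)+2) := by
    have h1 : (m:ℝ) ≤ (P:ℝ) * (100*(y:ℝ)+2) := by
      have := (Nat.cast_le (α := ℝ)).mpr hmle
      push_cast at this
      linarith only [this]
    calc Real.log m ≤ Real.log ((P:ℝ) * (100*(y:ℝ)+2)) := Real.log_le_log hm0r h1
      _ = Real.log P + Real.log (100*(y:ℝ)+2) := Real.log_mul hPr.ne' (by positivity)
  have hlogP : Real.log P = ∑ p ∈ U, Real.log p := by
    rw [hPdef, Nat.cast_prod]
    exact Real.log_prod (fun p hp => by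
      exact_mod_cast (hUprime p hp).pos.ne')
  have hdisj1 : Disjoint U₁ G := by rw [hU₁def]; exact Finset.sdiff_disjoint
  have hdisj2 : Disjoint (U₁ ∪ G) R' := by
    rw [Finset.disjoint_left]
    intro p hp
    rcases Finset.mem_union.mp hp with h | h
    · exact hU₁R' p h
    · exact hGR' p h
  have hsplit : ∑ p ∈ U, Real.log p =
      (∑ p ∈ U₁, Real.log p) + K_G + (∑ p ∈ R', Real.log p) := by
    rw [hUdef, Finset.sum_union hdisj2, Finset.sum_union hdisj1, hKG]
  -- U₁ weight
  have hlog4 : Real.log 4 ≤ 1.3862943616 := by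
    rw [show (4:ℝ) = 2^2 by norm_num, Real.log_pow]
    push_cast
    linarith
  have hlog4nn : (0:ℝ) ≤ Real.log 4 := Real.log_nonneg (by norm_num)
  have hW1 : (∑ p ∈ U₁, Real.log p) ≤ ((B:ℝ)+1) * Real.log 4 := by
    have hsub : U₁ ⊆ (B+1).primesBelow := by rw [hU₁def]; exact Finset.sdiff_subset
    have h1 : (∑ p ∈ U₁, Real.log p) ≤ ∑ p ∈ (B+1).primesBelow, Real.log p := by
      refine Finset.sum_le_sum_of_subset_of_nonneg hsub (fun p hp _ => ?_)
      exact Real.log_nonneg (by exact_mod_cast (Nat.prime_of_mem_primesBelow hp).one_le)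
    have h2 : ∑ p ∈ (B+1).primesBelow, Real.log p
        = Real.log ((∏ p ∈ (B+1).primesBelow, p : ℕ) : ℝ) := by
      rw [Nat.cast_prod]
      exact (Real.log_prod (fun p hp => by
        exact_mod_cast (Nat.prime_of_mem_primesBelow hp).pos.ne')).symm
    have h3 : Real.log ((∏ p ∈ (B+1).primesBelow, p : ℕ) : ℝ) ≤ Real.log ((4:ℝ)^(B+1)) := by
      apply Real.log_le_log
      · exact_mod_cast Finset.prod_pos (fun p hp => (Nat.prime_of_mem_primesBelow hp).pos)
      · exact_mod_cast prod_primesBelow_le (B+1)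
    rw [Real.log_pow] at h3
    have h4 : ((B+1:ℕ):ℝ) = (B:ℝ)+1 := by push_cast; ring
    rw [h4] at h3
    linarith only [h1, h2, h3]
  have h70C : 70 * C ≤ (y:ℝ) := by
    have h1 : ((⌈(70:ℝ)*C⌉₊ : ℕ):ℝ) ≤ (y:ℝ) := by exact_mod_cast hyC
    have h2 := Nat.le_ceil ((70:ℝ)*C)
    linarith only [h1, h2]
  have hBr : (B:ℝ) ≤ (y:ℝ)/(8*C) := by
    have h1 : ((B:ℕ):ℝ) ≤ (y:ℝ)/(c₈:ℝ) := by
      rw [hBdef]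
      exact Nat.cast_div_le
    have h2 : (y:ℝ)/(c₈:ℝ) ≤ (y:ℝ)/(8*C) := by
      apply div_le_div_of_nonneg_left (by positivity) (by linarith only [hC0]) hc₈C
    linarith only [h1, h2]
  have hCW1 : C * (∑ p ∈ U₁, Real.log p) ≤ 0.2 * y := by
    have h1 : C * (∑ p ∈ U₁, Real.log p) ≤ C * (((B:ℝ)+1) * Real.log 4) :=
      mul_le_mul_of_nonneg_left hW1 hC0.le
    have h2 : C * ((y:ℝ)/(8*C) + 1) = (y:ℝ)/8 + C := by field_simp
    have h3 : C * (((B:ℝ)+1) * Real.log 4) = (C * ((B:ℝ)+1)) * Real.log 4 := by ring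
    have h4 : C * ((B:ℝ)+1) ≤ (y:ℝ)/8 + C := by
      have := mul_le_mul_of_nonneg_left (by linarith only [hBr] : (B:ℝ)+1 ≤ (y:ℝ)/(8*C) + 1) hC0.le
      linarith only [this, h2]
    have h5 : (C * ((B:ℝ)+1)) * Real.log 4 ≤ ((y:ℝ)/8 + C) * Real.log 4 :=
      mul_le_mul_of_nonneg_right h4 hlog4nn
    have h6 : ((y:ℝ)/8 + C) * Real.log 4 ≤ ((y:ℝ)/8 + C) * 1.3862943616 := by
      apply mul_le_mul_of_nonneg_left hlog4 (by positivity)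
    -- (y/8 + C) * 1.3862943616 ≤ 0.2 y  using 70C ≤ y
    linarith only [h1, h3, h5, h6, h70C]
  have hCKG : C * K_G ≤ (y:ℝ)/8 := by
    have h1 : ((⌈(8:ℝ)*C*K_G⌉₊ : ℕ):ℝ) ≤ (y:ℝ) := by exact_mod_cast hyKG
    have h2 := Nat.le_ceil ((8:ℝ)*C*K_G)
    linarith only [h1, h2]
  -- reserve weight
  have hWR : (∑ p ∈ R', Real.log p) ≤ (S_fin.card:ℝ) * (2 * Real.log y) := by
    have h1 : ∀ p ∈ R', Real.log p ≤ 2 * Real.log y := by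
      intro p hp
      have hpb := (hR'big p hp).2.1
      have hpprime := (hR'big p hp).2.2
      have h2 : (p:ℝ) ≤ (((100*y+1:ℕ)):ℝ) := by exact_mod_cast hpb.le
      calc Real.log p ≤ Real.log (((100*y+1:ℕ)):ℝ) :=
            Real.log_le_log (by exact_mod_cast hpprime.pos) h2
        _ ≤ 2 * Real.log y := hlog100
    calc (∑ p ∈ R', Real.log p) ≤ R'.card • (2 * Real.log y) :=
          Finset.sum_le_card_nsmul _ _ _ h1
      _ = (R'.card:ℝ) * (2 * Real.log y) := by rw [nsmul_eq_mul]
      _ = (S_fin.card:ℝ) * (2 * Real.log y) := by rw [hR'card]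
  have hCWR : C * (∑ p ∈ R', Real.log p) ≤ (0.21:ℝ) * y := by
    -- C * S_fin * log y ≤ 6/64 y + 1/100 y
    have hq1 : (S_fin.card:ℝ) * Real.log y ≤ ρ * (S₀.card:ℝ) * Real.log y :=
      mul_le_mul_of_nonneg_right hSfinρ hlogy0.le
    have hX0 : (0:ℝ) ≤ (((k+1)^g:ℕ):ℝ) := Nat.cast_nonneg _
    have hq2 : ρ * (S₀.card:ℝ) ≤ ρ * π₁ + (((k+1)^g:ℕ):ℝ) := by
      have h2 : (S₀.card:ℝ) ≤ π₁ + (((k+1)^g:ℕ):ℝ) := by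
        rw [hπ₁def]
        exact_mod_cast hS₀card
      have h3 : ρ * (S₀.card:ℝ) ≤ ρ * (π₁ + (((k+1)^g:ℕ):ℝ)) :=
        mul_le_mul_of_nonneg_left h2 hρ0
      have h4 : ρ * (((k+1)^g:ℕ):ℝ) ≤ 1 * (((k+1)^g:ℕ):ℝ) :=
        mul_le_mul_of_nonneg_right hρ1 hX0
      linarith only [h3, h4]
    have hq3 : ρ * π₁ * Real.log y ≤ ρ * (6 * y) := by
      calc ρ * π₁ * Real.log y = ρ * (π₁ * Real.log y) := by ring
        _ ≤ ρ * (6 * y) := mul_le_mul_of_nonneg_left hπ₁b hρ0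
    have hq4 : ρ * (6 * y) ≤ (1/(64*C)) * (6 * y) :=
      mul_le_mul_of_nonneg_right hρ (by positivity)
    have hq5 : (S_fin.card:ℝ) * Real.log y
        ≤ (1/(64*C)) * (6*y) + (((k+1)^g:ℕ):ℝ) * Real.log y := by
      have h6 : ρ * (S₀.card:ℝ) * Real.log y
          ≤ (ρ * π₁ + (((k+1)^g:ℕ):ℝ)) * Real.log y :=
        mul_le_mul_of_nonneg_right hq2 hlogy0.le
      have h7 : (ρ * π₁ + (((k+1)^g:ℕ):ℝ)) * Real.log y
          = ρ * π₁ * Real.log y + (((k+1)^g:ℕ):ℝ) * Real.log y := by ring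
      linarith only [hq1, h6, h7, hq3, hq4]
    have hq6 : C * ((((k+1)^g:ℕ):ℝ) * Real.log y) ≤ (1/100) * y := by
      have h8 : (((k+1)^g:ℕ):ℝ) * Real.log y ≤ 5^g * (Real.log y)^g * Real.log y :=
        mul_le_mul_of_nonneg_right hLgpow hlogy0.le
      have h9 : (5:ℝ)^g * (Real.log y)^g * Real.log y = 5^g * (Real.log y)^(g+1) := by ring
      have h10 : C * ((((k+1)^g:ℕ):ℝ) * Real.log y) ≤ C * (5^g * (Real.log y)^(g+1)) := by
        apply mul_le_mul_of_nonneg_left _ hC0.le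
        rw [← h9]; exact h8
      have h11 : C * (5^g * (Real.log y)^(g+1)) = (C * 5^g) * Real.log y ^ (g+1) := by ring
      linarith only [h10, h11, hmaster2]
    have hq7 : C * ((1/(64*C)) * (6*y)) = (6/64) * y := by field_simp
    have hq8 : C * ((S_fin.card:ℝ) * Real.log y) ≤ (6/64) * y + (1/100) * y := by
      have := mul_le_mul_of_nonneg_left hq5 hC0.le
      rw [mul_add] at this
      linarith only [this, hq6, hq7]
    have hq9 : C * (∑ p ∈ R', Real.log p) ≤ C * ((S_fin.card:ℝ) * (2 * Real.log y)) :=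
      mul_le_mul_of_nonneg_left hWR hC0.le
    have hq10 : C * ((S_fin.card:ℝ) * (2 * Real.log y))
        = 2 * (C * ((S_fin.card:ℝ) * Real.log y)) := by ring
    linarith only [hq9, hq10, hq8]
  have hClog100 : C * Real.log (100*(y:ℝ)+2) ≤ (y:ℝ)/16 := by
    have h1 : (100*(y:ℝ)+2) ≤ 102 * y := by linarith only [hy1r]
    have h2 : Real.log (100*(y:ℝ)+2) ≤ Real.log (102 * y) :=
      Real.log_le_log (by positivity) h1
    have h3 : Real.log (102 * (y:ℝ)) = Real.log 102 + Real.log y :=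
      Real.log_mul (by norm_num) (by positivity)
    have h4 : Real.log 102 ≤ Real.log 128 := Real.log_le_log (by norm_num) (by norm_num)
    have h5 : Real.log 128 = 7 * Real.log 2 := by
      rw [show (128:ℝ) = 2^7 by norm_num, Real.log_pow]; push_cast; ring
    have h6 : Real.log (100*(y:ℝ)+2) ≤ 2 * Real.log y := by
      linarith only [h2, h3, h4, h5, hlog2lt, hlogy5]
    have h7 : C * Real.log (100*(y:ℝ)+2) ≤ C * (2 * Real.log y) :=
      mul_le_mul_of_nonneg_left h6 hC0.le
    have h8 : 6 * C * Real.log y ^ 1 ≤ 1/16 * y := hmaster1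
    rw [pow_one] at h8
    linarith only [h7, h8, mul_nonneg hC0.le hlogy0.le]
  -- combine
  have htotal : C * Real.log m ≤ 0.2*y + (y:ℝ)/8 + 0.21*y + (y:ℝ)/16 := by
    have h1 : C * Real.log m ≤ C * (Real.log P + Real.log (100*(y:ℝ)+2)) :=
      mul_le_mul_of_nonneg_left hlogm hC0.le
    rw [hlogP, hsplit] at h1
    have h2 : C * ((∑ p ∈ U₁, Real.log p) + K_G + (∑ p ∈ R', Real.log p)
        + Real.log (100*(y:ℝ)+2))
        = C * (∑ p ∈ U₁, Real.log p) + C * K_G + C * (∑ p ∈ R', Real.log p)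
        + C * Real.log (100*(y:ℝ)+2) := by ring
    linarith only [h1, h2, hCW1, hCKG, hCWR, hClog100]
  have hfin : (0.2:ℝ)*y + (y:ℝ)/8 + 0.21*y + (y:ℝ)/16 < y := by linarith only [hy1r]
  linarith only [htotal, hfin]


open Filter

/-- **Westzynthius.** For every `C > 0` there are infinitely many `n` with
`p_{n+1} − p_n > C · log p_n`. -/
theorem prime_gaps_exceed_any_multiple_of_log :
    ∀ C : ℝ, 0 < C →
      ∃ᶠ n : ℕ in Filter.atTop,
        C * Real.log (Nat.nth Nat.Prime n) <
          (Nat.nth Nat.Prime (n + 1) : ℝ) - (Nat.nth Nat.Prime n : ℝ) := by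
  intro C hC
  rw [Filter.frequently_atTop]
  intro N₀
  set C' := max C 1 with hC'def
  have hC'1 : 1 ≤ C' := le_max_right C 1
  have hCC' : C ≤ C' := le_max_left C 1
  have hinf := Nat.infinite_setOf_prime
  -- unboundedness of the prime count
  have hcount : Tendsto (Nat.count Nat.Prime) atTop atTop := by
    refine tendsto_atTop_atTop_of_monotone (Nat.count_monotone _) (fun b => ?_)
    refine ⟨Nat.nth Nat.Prime b + 1, ?_⟩
    have : b < Nat.count Nat.Prime (Nat.nth Nat.Prime b + 1) :=
      (Nat.lt_nth_iff_count_lt hinf).mpr (Nat.lt_succ_self _)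
    omega
  obtain ⟨Y, hY⟩ := (hcount.eventually (eventually_ge_atTop (N₀ + 2))).exists_forall_of_atTop
  obtain ⟨m, y, hm2, hYy, hym, hcomp, hlog⟩ := core_construction C' hC'1 Y
  set k := Nat.count Nat.Prime (m + 1) with hkdef
  have hk : N₀ + 2 ≤ k := by
    refine le_trans (hY (m+1) (by omega)) (le_refl _)
  set n := k - 1 with hndef
  have hn1 : n + 1 = k := by omega
  have hnk : n < Nat.count Nat.Prime (m + 1) := by rw [← hkdef]; omega
  have h1 : Nat.nth Nat.Prime n < m + 1 :=
    (Nat.lt_nth_iff_count_lt hinf).mp hnk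
  have h2 : m + 1 ≤ Nat.nth Nat.Prime (n + 1) := by
    by_contra h
    push_neg at h
    have h3 := (Nat.lt_nth_iff_count_lt hinf).mpr h
    rw [← hkdef] at h3
    omega
  have hprime : (Nat.nth Nat.Prime (n + 1)).Prime := Nat.prime_nth_prime (n + 1)
  have h3 : m + y + 1 ≤ Nat.nth Nat.Prime (n + 1) := by
    by_contra h
    push_neg at h
    set s := Nat.nth Nat.Prime (n + 1) - m with hsdef
    have hs1 : 1 ≤ s := by omega
    have hs2 : s ≤ y := by omega
    have : m + s = Nat.nth Nat.Prime (n + 1) := by omega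
    exact hcomp s hs1 hs2 (this ▸ hprime)
  refine ⟨n, by omega, ?_⟩
  -- final chain of inequalities
  have hnthprime : (Nat.nth Nat.Prime n).Prime := Nat.prime_nth_prime n
  have hnth1 : (1:ℝ) ≤ (Nat.nth Nat.Prime n : ℝ) := by
    exact_mod_cast hnthprime.one_le
  have hlognn : 0 ≤ Real.log (Nat.nth Nat.Prime n) := Real.log_nonneg hnth1
  have hle1 : C * Real.log (Nat.nth Nat.Prime n) ≤ C' * Real.log (Nat.nth Nat.Prime n) :=
    mul_le_mul_of_nonneg_right hCC' hlognn
  have hle2 : C' * Real.log (Nat.nth Nat.Prime n) ≤ C' * Real.log m := by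
    refine mul_le_mul_of_nonneg_left ?_ (by linarith only [hC'1] : (0:ℝ) ≤ C')
    refine Real.log_le_log (by linarith only [hnth1]) ?_
    exact_mod_cast (by omega : Nat.nth Nat.Prime n ≤ m)
  have hgap : (y:ℝ) + 1 ≤ (Nat.nth Nat.Prime (n + 1) : ℝ) - (Nat.nth Nat.Prime n : ℝ) := by
    have ha : ((m + y + 1 : ℕ):ℝ) ≤ (Nat.nth Nat.Prime (n + 1) : ℝ) := by exact_mod_cast h3
    have hb : (Nat.nth Nat.Prime n : ℝ) ≤ (m:ℝ) := by exact_mod_cast (by omega : Nat.nth Nat.Prime n ≤ m)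
    push_cast at ha
    linarith only [ha, hb]
  linarith only [hle1, hle2, hlog, hgap]
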